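/- Let C1 and C2 be real numbers and let s, t : ℕ → ℝ be the SimRank iterates on the complete bipartite graph K_{2,2}, i.e. s 0 = 0, t 0 = 0, s (k+1) = (C2/2)·(1 + t k) and t (k+1) = (C1/2)·(1 + s k). Then for every k ∈ ℕ, s k = (C2/2) · Σ_{i=1}^{k} (1/2)^{i-1} · C1^{⌊i/2⌋} · C2^{⌊(i-1)/2⌋}. -/

import Mathlib

theorem simrank_K22_closed_form_s
    (C1 C2 : ℝ) (s t : ℕ → ℝ)
    (hs0 : s 0 = 0) (ht0 : t 0 = 0)
    (hs : ∀ k, s (k + 1) = (C2 / 2) * (1 + t k))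
    (ht : ∀ k, t (k + 1) = (C1 / 2) * (1 + s k)) :
    ∀ k : ℕ, s k =
      (C2 / 2) * ∑ i ∈ Finset.Icc 1 k,
        (1 / 2 : ℝ) ^ (i - 1) * C1 ^ (i / 2) * C2 ^ ((i - 1) / 2) := by
  have hsum : ∀ (A B : ℝ) (k : ℕ), (∑ i ∈ Finset.Icc 1 (k+1),
      (1/2:ℝ)^(i-1) * A^(i/2) * B^((i-1)/2)) =
      1 + ∑ i ∈ Finset.Icc 1 k, (A/2) * ((1/2:ℝ)^(i-1) * B^(i/2) * A^((i-1)/2)) := by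
    intro A B k
    rw [← Finset.Ico_add_one_right_eq_Icc, ← Finset.Ico_add_one_right_eq_Icc, Finset.sum_Ico_eq_sum_range,
      Finset.sum_Ico_eq_sum_range]
    simp only [Nat.add_sub_cancel]
    rw [Finset.sum_range_succ']
    rw [add_comm]
    congr 1
    · norm_num
    · apply Finset.sum_congr rfl
      intro i _
      have e1 : 1 + (i+1) - 1 = i + 1 := by omega
      have e2 : (1 + (i+1)) / 2 = i/2 + 1 := by omega
      have e3 : (i + 1) / 2 = (1 + i) / 2 := by omega
      have e5 : 1 + i - 1 = i := by omega
      rw [e1, e2, e3, e5, pow_succ, pow_succ]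
      ring
  have main : ∀ k, s k = (C2/2) * ∑ i ∈ Finset.Icc 1 k,
      (1/2:ℝ)^(i-1) * C1^(i/2) * C2^((i-1)/2) ∧
      t k = (C1/2) * ∑ i ∈ Finset.Icc 1 k,
      (1/2:ℝ)^(i-1) * C2^(i/2) * C1^((i-1)/2) := by
    intro k
    induction k with
    | zero => simp [hs0, ht0]
    | succ k ih =>
      constructor
      · rw [hs k, ih.2, hsum C1 C2 k]
        rw [Finset.mul_sum]
      · rw [ht k, ih.1, hsum C2 C1 k]
        rw [Finset.mul_sum]
  intro k
  exact (main k).1
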